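/- Let c ∈ ℝ, let a be a P-periodic locally integrable weight satisfying (a*), and let g : [0,1] → ℝ be continuously differentiable satisfying (g*) and g'(0) = 0. Let λ > 0 and μ > μ#(λ). Then there exists r₀ ∈ (0,1) such that for every θ ∈ (0,1], every non-negative P-periodic solution u of u'' + cu' + θ(λa⁺(x) − μa⁻(x))g(u) = 0 with ‖u‖_∞ ≤ r₀ satisfies u ≡ 0. -/

import Mathlib

open MeasureTheory Set Filter Topology

noncomputable section

/-- Carathéodory solution of `u'' + c u' + h(x, u(x)) = 0` on `J`:
`u` is C¹ on `J` with derivative `u'`, which is (locally) absolutely continuous with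
a.e.-derivative `u''`, and the equation holds a.e. on `J`. -/
def CaraSol (c : ℝ) (h : ℝ → ℝ → ℝ) (u u' : ℝ → ℝ) (J : Set ℝ) : Prop :=
  (∀ x ∈ J, HasDerivWithinAt u (u' x) J x) ∧
  ContinuousOn u' J ∧
  ∃ u'' : ℝ → ℝ,
    (∀ x ∈ J, ∀ y ∈ J, u' y - u' x = ∫ t in x..y, u'' t) ∧
    (∀ᵐ x ∂(volume.restrict J), u'' x + c * u' x + h x (u x) = 0)

/-- positive part `a⁺` of a weight -/
def pospart (a : ℝ → ℝ) : ℝ → ℝ := fun x => max (a x) 0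

/-- negative part `a⁻` of a weight -/
def negpart (a : ℝ → ℝ) : ℝ → ℝ := fun x => max (-a x) 0

/-- the two-parameter weight `a_{λ,μ} = λ a⁺ - μ a⁻` -/
def awt (a : ℝ → ℝ) (lam mu : ℝ) : ℝ → ℝ := fun x => lam * pospart a x - mu * negpart a x

/-- the critical ratio `μ#(λ) = λ ∫₀^P a⁺ / ∫₀^P a⁻` -/
def muSharp (a : ℝ → ℝ) (P lam : ℝ) : ℝ :=
  lam * (∫ x in (0:ℝ)..P, pospart a x) / (∫ x in (0:ℝ)..P, negpart a x)

/-- A `P`-periodic locally integrable weight satisfying `(a*)`, with `m` positivity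
intervals `I⁺ᵢ = [σ i, τ i]` separated by negativity intervals `I⁻ᵢ = [τ i, σ (i+1)]`. -/
structure AStar (P : ℝ) (m : ℕ) (a : ℝ → ℝ) (σ τ : ℕ → ℝ) : Prop where
  hP : 0 < P
  hm : 1 ≤ m
  periodic : ∀ x, a (x + P) = a x
  locint : LocallyIntegrable a volume
  σ_one : σ 1 = 0
  σ_last : σ (m + 1) = P
  lt_στ : ∀ i ∈ Finset.Icc 1 m, σ i < τ i
  lt_τσ : ∀ i ∈ Finset.Icc 1 m, τ i < σ (i + 1)
  pos_ae : ∀ i ∈ Finset.Icc 1 m, ∀ᵐ x ∂(volume.restrict (Icc (σ i) (τ i))), 0 ≤ a x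
  pos_ne : ∀ i ∈ Finset.Icc 1 m, ¬ (∀ᵐ x ∂(volume.restrict (Icc (σ i) (τ i))), a x = 0)
  neg_ae : ∀ i ∈ Finset.Icc 1 m, ∀ᵐ x ∂(volume.restrict (Icc (τ i) (σ (i + 1)))), a x ≤ 0
  neg_ne : ∀ i ∈ Finset.Icc 1 m, ¬ (∀ᵐ x ∂(volume.restrict (Icc (τ i) (σ (i + 1)))), a x = 0)

/-- condition `(g*)` -/
def Gstar (g : ℝ → ℝ) : Prop := g 0 = 0 ∧ g 1 = 0 ∧ ∀ u ∈ Ioo (0:ℝ) 1, 0 < g u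

/-- condition `(g₀)`: `g(u)/u → 0` as `u → 0⁺` -/
def Gzero (g : ℝ → ℝ) : Prop := Tendsto (fun u => g u / u) (𝓝[>] (0:ℝ)) (𝓝 0)

/-- condition `(g₁)`: `limsup_{u→1⁻} g(u)/(1-u) < ∞` -/
def Gone (g : ℝ → ℝ) : Prop := ∃ K : ℝ, ∀ᶠ u in 𝓝[<] (1:ℝ), g u / (1 - u) ≤ K

/-- `P`-periodic Carathéodory solution of `u'' + c u' + w(x) g(u) = 0` on `ℝ`. -/
def PerSol (c : ℝ) (w g u u' : ℝ → ℝ) (P : ℝ) : Prop :=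
  CaraSol c (fun x v => w x * g v) u u' univ ∧ ∀ x, u (x + P) = u x
private lemma gLip (g : ℝ → ℝ) (hg : ContDiffOn ℝ 1 g (Icc 0 1))
    (hg'0 : derivWithin g (Icc 0 1) 0 = 0) {ε : ℝ} (hε : 0 < ε) :
    ∃ δ : ℝ, 0 < δ ∧ δ ≤ 1/2 ∧
      ∀ x ∈ Icc (0:ℝ) δ, ∀ y ∈ Icc (0:ℝ) δ, |g x - g y| ≤ ε * |x - y| := by
  have hu : UniqueDiffOn ℝ (Icc (0:ℝ) 1) := uniqueDiffOn_Icc one_pos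
  have hcont : ContinuousOn (derivWithin g (Icc 0 1)) (Icc 0 1) :=
    hg.continuousOn_derivWithin hu le_rfl
  have h0 : ContinuousWithinAt (derivWithin g (Icc 0 1)) (Icc 0 1) 0 :=
    hcont 0 (by constructor <;> norm_num)
  rw [Metric.continuousWithinAt_iff] at h0
  obtain ⟨δ₀, hδ₀, hball⟩ := h0 ε hε
  have hδpos : 0 < min (δ₀/2) (1/2) := by positivity
  refine ⟨min (δ₀/2) (1/2), hδpos, min_le_right _ _, ?_⟩
  set δ := min (δ₀/2) (1/2) with hδdef
  have hδ1 : δ ≤ 1/2 := min_le_right _ _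
  have hsub : Icc (0:ℝ) δ ⊆ Icc 0 1 := Icc_subset_Icc le_rfl (by linarith)
  have hbound : ∀ x ∈ Icc (0:ℝ) δ, ‖derivWithin g (Icc 0 δ) x‖ ≤ ε := by
    intro x hx
    have hx1 : x ∈ Icc (0:ℝ) 1 := hsub hx
    have hder : derivWithin g (Icc 0 δ) x = derivWithin g (Icc 0 1) x :=
      derivWithin_subset hsub ((uniqueDiffOn_Icc hδpos) x hx)
        ((hg.differentiableOn one_ne_zero) x hx1)
    have hdist : dist x 0 < δ₀ := by
      rw [Real.dist_eq, sub_zero, abs_of_nonneg hx.1]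
      have h1 : x ≤ δ := hx.2
      have h2 : δ ≤ δ₀ / 2 := min_le_left _ _
      linarith
    have h3 := hball hx1 hdist
    rw [hg'0, dist_zero_right] at h3
    rw [hder]; exact h3.le
  intro x hx y hy
  have h4 := Convex.norm_image_sub_le_of_norm_derivWithin_le
    ((hg.differentiableOn one_ne_zero).mono hsub) hbound (convex_Icc 0 δ) hy hx
  simpa [Real.norm_eq_abs] using h4

private lemma sigma_mono {P : ℝ} {m : ℕ} {a : ℝ → ℝ} {σ τ : ℕ → ℝ} (ha : AStar P m a σ τ) :
    ∀ i j : ℕ, 1 ≤ i → i ≤ j → j ≤ m + 1 → σ i ≤ σ j := by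
  intro i j h1 hij hj
  induction j with
  | zero => omega
  | succ k ih =>
    rcases Nat.lt_or_ge i (k+1) with h | h
    · have hik : i ≤ k := by omega
      have hkmem : k ∈ Finset.Icc 1 m := Finset.mem_Icc.mpr ⟨le_trans h1 hik, by omega⟩
      have h5 : σ k ≤ σ (k+1) :=
        le_of_lt (lt_trans (ha.lt_στ k hkmem) (ha.lt_τσ k hkmem))
      exact le_trans (ih hik (by omega)) h5
    · have h6 : i = k + 1 := by omega
      rw [h6]

private lemma pos_int_of_ae (f : ℝ → ℝ) {s t : ℝ} (hst : s < t)
    (hf : IntegrableOn f (Icc s t) volume)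
    (hnn : ∀ x, 0 ≤ f x)
    (hne : ¬ (∀ᵐ x ∂(volume.restrict (Icc s t)), f x = 0)) :
    0 < ∫ x in s..t, f x := by
  have h1 : ∫ x in s..t, f x = ∫ x in Icc s t, f x := by
    rw [intervalIntegral.integral_of_le hst.le, ← integral_Icc_eq_integral_Ioc]
  have hnn' : 0 ≤ ∫ x in Icc s t, f x :=
    setIntegral_nonneg measurableSet_Icc (fun x _ => hnn x)
  rcases hnn'.lt_or_eq with h | h
  · rw [h1]; exact h
  · exfalso
    apply hne
    have h2 := (integral_eq_zero_iff_of_nonneg (fun x => hnn x) hf).mp h.symm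
    filter_upwards [h2] with x hx using hx

private lemma pospart_ne_zero {P : ℝ} {m : ℕ} {a : ℝ → ℝ} {σ τ : ℕ → ℝ}
    (ha : AStar P m a σ τ) {i : ℕ} (him : i ∈ Finset.Icc 1 m) :
    ¬ (∀ᵐ x ∂(volume.restrict (Icc (σ i) (τ i))), pospart a x = 0) := by
  intro h
  apply ha.pos_ne i him
  filter_upwards [h, ha.pos_ae i him] with x h1 h2
  have h3 : a x ≤ max (a x) 0 := le_max_left _ _
  have h4 : max (a x) 0 = 0 := h1
  linarith

private lemma negpart_ne_zero {P : ℝ} {m : ℕ} {a : ℝ → ℝ} {σ τ : ℕ → ℝ}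
    (ha : AStar P m a σ τ) {i : ℕ} (him : i ∈ Finset.Icc 1 m) :
    ¬ (∀ᵐ x ∂(volume.restrict (Icc (τ i) (σ (i+1)))), negpart a x = 0) := by
  intro h
  apply ha.neg_ne i him
  filter_upwards [h, ha.neg_ae i him] with x h1 h2
  have h3 : -a x ≤ max (-a x) 0 := le_max_left _ _
  have h4 : max (-a x) 0 = 0 := h1
  linarith
set_option maxHeartbeats 1000000 in
/-- Lemma 2.4 (lem-r0): small non-negative periodic solutions of
`u'' + cu' + θ a_{λ,μ}(x) g(u) = 0` are identically zero. -/
theorem statement8 (c P : ℝ) (m : ℕ) (a : ℝ → ℝ) (σ τ : ℕ → ℝ)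
    (ha : AStar P m a σ τ)
    (g : ℝ → ℝ) (hg : ContDiffOn ℝ 1 g (Icc 0 1)) (hgs : Gstar g)
    (hg'0 : derivWithin g (Icc 0 1) 0 = 0)
    (lam mu : ℝ) (hlam : 0 < lam) (hmu : muSharp a P lam < mu) :
    ∃ r0 ∈ Ioo (0:ℝ) 1, ∀ θ ∈ Ioc (0:ℝ) 1, ∀ u u' : ℝ → ℝ,
      PerSol c (fun x => θ * awt a lam mu x) g u u' P →
      (∀ x, 0 ≤ u x) → sSup (u '' Icc (0:ℝ) P) ≤ r0 → ∀ x, u x = 0 := by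
  obtain ⟨hg0, hg1, hgpos⟩ := hgs
  have hP : (0:ℝ) < P := ha.hP
  -- basic integrability of the weight parts
  have haOn : ∀ x y : ℝ, IntegrableOn a (uIcc x y) volume :=
    fun x y => ha.locint.integrableOn_isCompact isCompact_uIcc
  have hposOn : ∀ x y : ℝ, IntegrableOn (pospart a) (uIcc x y) volume :=
    fun x y => (haOn x y).pos_part
  have hnegOn : ∀ x y : ℝ, IntegrableOn (negpart a) (uIcc x y) volume :=
    fun x y => ((haOn x y).neg).pos_part
  have hposInt : ∀ x y : ℝ, IntervalIntegrable (pospart a) volume x y :=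
    fun x y => (hposOn x y).intervalIntegrable
  have hnegInt : ∀ x y : ℝ, IntervalIntegrable (negpart a) volume x y :=
    fun x y => (hnegOn x y).intervalIntegrable
  -- positivity of the mean values
  set Ap := ∫ x in (0:ℝ)..P, pospart a x with hApdef
  set An := ∫ x in (0:ℝ)..P, negpart a x with hAndef
  have h1m : (1:ℕ) ∈ Finset.Icc 1 m := Finset.mem_Icc.mpr ⟨le_rfl, ha.hm⟩
  have hmm : m ∈ Finset.Icc 1 m := Finset.mem_Icc.mpr ⟨ha.hm, le_rfl⟩
  have hτ1P : τ 1 ≤ P := by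
    have h1 := ha.lt_τσ 1 h1m
    have h2 : σ 2 ≤ σ (m+1) := sigma_mono ha 2 (m+1) (by omega) (by have := ha.hm; omega) le_rfl
    rw [ha.σ_last] at h2; linarith
  have hτ1pos : 0 < τ 1 := by
    have := ha.lt_στ 1 h1m; rw [ha.σ_one] at this; exact this
  have hτm0 : 0 ≤ τ m := by
    have h1 : σ 1 ≤ σ m := sigma_mono ha 1 m le_rfl ha.hm (by omega)
    have h2 := ha.lt_στ m hmm
    rw [ha.σ_one] at h1; linarith
  have hτmP : τ m < P := by
    have := ha.lt_τσ m hmm; rwa [ha.σ_last] at this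
  have hAp : 0 < Ap := by
    have hbase : 0 < ∫ x in (σ 1)..(τ 1), pospart a x := by
      refine pos_int_of_ae (pospart a) (ha.lt_στ 1 h1m) ?_ (fun x => le_max_right _ _)
        (pospart_ne_zero ha h1m)
      exact (ha.locint.integrableOn_isCompact isCompact_Icc).pos_part
    rw [ha.σ_one] at hbase
    have hsplit : (∫ x in (0:ℝ)..(τ 1), pospart a x) + ∫ x in (τ 1)..P, pospart a x = Ap :=
      intervalIntegral.integral_add_adjacent_intervals (hposInt 0 (τ 1)) (hposInt (τ 1) P)
    have h2 : 0 ≤ ∫ x in (τ 1)..P, pospart a x :=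
      intervalIntegral.integral_nonneg hτ1P (fun x _ => le_max_right _ _)
    linarith
  have hAn : 0 < An := by
    have hbase : 0 < ∫ x in (τ m)..(σ (m+1)), negpart a x := by
      refine pos_int_of_ae (negpart a) (ha.lt_τσ m hmm) ?_ (fun x => le_max_right _ _)
        (negpart_ne_zero ha hmm)
      exact ((ha.locint.integrableOn_isCompact isCompact_Icc).neg).pos_part
    rw [ha.σ_last] at hbase
    have hsplit : (∫ x in (0:ℝ)..(τ m), negpart a x) + ∫ x in (τ m)..P, negpart a x = An :=
      intervalIntegral.integral_add_adjacent_intervals (hnegInt 0 (τ m)) (hnegInt (τ m) P)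
    have h2 : 0 ≤ ∫ x in (0:ℝ)..(τ m), negpart a x :=
      intervalIntegral.integral_nonneg hτm0 (fun x _ => le_max_right _ _)
    linarith
  have hmulA : lam * Ap < mu * An := by
    rw [muSharp, div_lt_iff₀ hAn] at hmu
    calc lam * Ap = lam * Ap := rfl
      _ < mu * An := hmu
  have hmupos : 0 < mu := by
    have h1 : 0 < lam * Ap := mul_pos hlam hAp
    by_contra hneg
    push_neg at hneg
    have h2 : mu * An ≤ 0 * An := mul_le_mul_of_nonneg_right hneg hAn.le
    rw [zero_mul] at h2
    linarith
  -- constants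
  set K := |c| + 1 with hKdef
  have hK1 : (1:ℝ) ≤ K := by have := abs_nonneg c; simp only [hKdef]; linarith
  have hK0 : 0 < K := lt_of_lt_of_le one_pos hK1
  set Q := lam * Ap + mu * An with hQdef
  have hQ : 0 < Q := by positivity
  set C4 := Q * Real.exp (K * P) with hC4def
  have hC4 : 0 < C4 := by positivity
  set ε := min (1/(2*C4)) ((mu*An - lam*Ap)/(4*C4*Q)) with hεdef
  have hε : 0 < ε := by
    apply lt_min
    · positivity
    · apply div_pos (by linarith) (by positivity)
  obtain ⟨δ, hδpos, hδhalf, hδLip⟩ := gLip g hg hg'0 hε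
  refine ⟨δ, ⟨hδpos, by linarith⟩, ?_⟩
  intro θ hθ u u' hsol hunn hsup
  obtain ⟨⟨hderiv, hu'cont, u'', hu''int, heqn⟩, hper⟩ := hsol
  have hθ0 : 0 < θ := hθ.1
  have hθ1 : θ ≤ 1 := hθ.2
  -- analytic facts about u
  have huderiv : ∀ x, HasDerivAt u (u' x) x := by
    intro x
    have := hderiv x (mem_univ x)
    rwa [hasDerivWithinAt_univ] at this
  have hucont : Continuous u := by
    have : Differentiable ℝ u := fun x => (huderiv x).differentiableAt
    exact this.continuous
  have hu'c : Continuous u' := continuousOn_univ.mp hu'cont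
  have hperiodic : Function.Periodic u P := hper
  have hred : ∀ x : ℝ, ∃ s ∈ Icc (0:ℝ) P, u x = u s := by
    intro x
    refine ⟨toIcoMod hP 0 x, Ico_subset_Icc_self (toIcoMod_mem_Ico' hP x), ?_⟩
    exact (hperiodic.sub_zsmul_eq (toIcoDiv hP 0 x)).symm
  -- max point of u
  have hIccne : (Icc (0:ℝ) P).Nonempty := nonempty_Icc.mpr hP.le
  obtain ⟨x₀, hx₀mem, hx₀max⟩ := isCompact_Icc.exists_isMaxOn hIccne hucont.continuousOn
  set M := u x₀ with hMdef
  have hsSup : sSup (u '' Icc 0 P) = M := by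
    apply IsGreatest.csSup_eq
    constructor
    · exact mem_image_of_mem u hx₀mem
    · rintro y ⟨z, hz, rfl⟩; exact hx₀max hz
  have hle : ∀ y, u y ≤ M := by
    intro y
    obtain ⟨s, hs, hus⟩ := hred y
    rw [hus]; exact hx₀max hs
  rw [hsSup] at hsup
  rcases le_or_gt M 0 with hM0 | hM0
  · intro x; exact le_antisymm ((hle x).trans hM0) (hunn x)
  exfalso
  -- ranges
  have hrange : ∀ x, u x ∈ Icc (0:ℝ) δ := fun x => ⟨hunn x, (hle x).trans hsup⟩
  have hMmem : M ∈ Icc (0:ℝ) δ := hrange x₀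
  have hsubδ : Icc (0:ℝ) δ ⊆ Icc 0 1 := Icc_subset_Icc le_rfl (by linarith)
  set G : ℝ → ℝ := fun t => g (u t) with hGdef
  have hGcont : Continuous G :=
    (hg.continuousOn).comp_continuous hucont (fun x => hsubδ (hrange x))
  have hGnn : ∀ x, 0 ≤ G x := by
    intro x
    rcases (hunn x).lt_or_eq with h | h
    · exact (hgpos (u x) ⟨h, by have := (hrange x).2; linarith⟩).le
    · simp only [hGdef, ← h, hg0, le_refl]
  have hgM : 0 < g M := hgpos M ⟨hM0, by have := hMmem.2; linarith⟩
  -- integrability of products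
  set w : ℝ → ℝ := fun t => lam * pospart a t + mu * negpart a t with hwdef
  have hwnn : ∀ t, 0 ≤ w t := fun t =>
    add_nonneg (mul_nonneg hlam.le (le_max_right _ _)) (mul_nonneg hmupos.le (le_max_right _ _))
  have hwOn : ∀ x y : ℝ, IntegrableOn w (uIcc x y) volume :=
    fun x y => ((hposOn x y).const_mul lam).add ((hnegOn x y).const_mul mu)
  have hwInt : ∀ x y : ℝ, IntervalIntegrable w volume x y :=
    fun x y => (hwOn x y).intervalIntegrable
  have hawtOn : ∀ x y : ℝ, IntegrableOn (awt a lam mu) (uIcc x y) volume :=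
    fun x y => ((hposOn x y).const_mul lam).sub ((hnegOn x y).const_mul mu)
  have hwgInt : ∀ x y : ℝ, IntervalIntegrable (fun t => w t * G t) volume x y :=
    fun x y => ((hwOn x y).mul_continuousOn hGcont.continuousOn isCompact_uIcc).intervalIntegrable
  have hawtgInt : ∀ x y : ℝ, IntervalIntegrable (fun t => awt a lam mu t * G t) volume x y :=
    fun x y =>
      ((hawtOn x y).mul_continuousOn hGcont.continuousOn isCompact_uIcc).intervalIntegrable
  have hposgInt : ∀ x y : ℝ, IntervalIntegrable (fun t => pospart a t * G t) volume x y :=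
    fun x y =>
      ((hposOn x y).mul_continuousOn hGcont.continuousOn isCompact_uIcc).intervalIntegrable
  have hneggInt : ∀ x y : ℝ, IntervalIntegrable (fun t => negpart a t * G t) volume x y :=
    fun x y =>
      ((hnegOn x y).mul_continuousOn hGcont.continuousOn isCompact_uIcc).intervalIntegrable
  -- the a.e. form of the equation
  have hae : ∀ᵐ x ∂(volume : Measure ℝ),
      u'' x = -(c * u' x) - θ * awt a lam mu x * g (u x) := by
    rw [Measure.restrict_univ] at heqn
    filter_upwards [heqn] with x hx
    linarith
  -- the key integral identity
  have hkey : ∀ x y : ℝ, u' y - u' x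
      = -(c * (u y - u x)) - θ * ∫ t in x..y, awt a lam mu t * G t := by
    intro x y
    have h1 := hu''int x (mem_univ x) y (mem_univ y)
    have h2 : ∫ t in x..y, u'' t
        = ∫ t in x..y, (-(c * u' t) - θ * (awt a lam mu t * G t)) := by
      apply intervalIntegral.integral_congr_ae
      filter_upwards [hae] with t ht _
      rw [ht]; ring
    have hInt1 : IntervalIntegrable (fun t => -(c * u' t)) volume x y :=
      ((continuous_const.mul hu'c).neg).intervalIntegrable x y
    have hInt2 : IntervalIntegrable (fun t => θ * (awt a lam mu t * G t)) volume x y :=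
      (hawtgInt x y).const_mul θ
    have h3 : ∫ t in x..y, (-(c * u' t) - θ * (awt a lam mu t * G t))
        = -(c * (u y - u x)) - θ * ∫ t in x..y, awt a lam mu t * G t := by
      rw [intervalIntegral.integral_sub hInt1 hInt2]
      have h4 : ∫ t in x..y, -(c * u' t) = -(c * (u y - u x)) := by
        rw [intervalIntegral.integral_neg, intervalIntegral.integral_const_mul]
        have h5 : ∫ t in x..y, u' t = u y - u x :=
          intervalIntegral.integral_eq_sub_of_hasDerivAt (fun t _ => huderiv t)
            (hu'c.intervalIntegrable x y)
        rw [h5]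
      rw [h4, intervalIntegral.integral_const_mul]
    rw [h1, h2, h3]
  -- u' is periodic at P
  have hu'per : u' P = u' 0 := by
    have h1 : HasDerivAt (fun x => u (x + P)) (u' (0 + P) * 1) 0 :=
      (huderiv (0 + P)).comp (0:ℝ) ((hasDerivAt_id (0:ℝ)).add_const P)
    have h2 : (fun x => u (x + P)) = u := funext hper
    rw [h2] at h1
    have h3 := h1.unique (huderiv 0)
    rw [← h3, zero_add, mul_one]
  -- integrating over a period
  have hstar : ∫ t in (0:ℝ)..P, awt a lam mu t * G t = 0 := by
    have h := hkey 0 P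
    have huP : u P = u 0 := by have := hper 0; rwa [zero_add] at this
    rw [hu'per, huP] at h
    have h6 : θ * ∫ t in (0:ℝ)..P, awt a lam mu t * G t = 0 := by linarith
    exact (mul_eq_zero.mp h6).resolve_left (ne_of_gt hθ0)
  set Ip := ∫ t in (0:ℝ)..P, pospart a t * G t with hIpdef
  set In := ∫ t in (0:ℝ)..P, negpart a t * G t with hIndef
  have heqPM : lam * Ip = mu * In := by
    have h1 : ∫ t in (0:ℝ)..P, awt a lam mu t * G t
        = ∫ t in (0:ℝ)..P, (lam * (pospart a t * G t) - mu * (negpart a t * G t)) := by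
      apply intervalIntegral.integral_congr
      intro t _
      show awt a lam mu t * G t = _
      unfold awt; ring
    rw [h1, intervalIntegral.integral_sub ((hposgInt 0 P).const_mul lam)
      ((hneggInt 0 P).const_mul mu), intervalIntegral.integral_const_mul,
      intervalIntegral.integral_const_mul] at hstar
    linarith
  -- derivative vanishes at the max point
  have hu'x₀ : u' x₀ = 0 := by
    have h1 : IsLocalMax u x₀ := Filter.Eventually.of_forall hle
    exact h1.hasDerivAt_eq_zero (huderiv x₀)
  -- Gronwall estimate
  set B := ∫ t in x₀..(x₀ + P), w t * G t with hBdef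
  have hx₀0 : 0 ≤ x₀ := hx₀mem.1
  have hx₀P : x₀ ≤ P := hx₀mem.2
  have hB0 : 0 ≤ B :=
    intervalIntegral.integral_nonneg (by linarith)
      (fun t _ => mul_nonneg (hwnn t) (hGnn t))
  have hJB : ∀ t ∈ Icc x₀ (x₀ + P), |∫ s in x₀..t, awt a lam mu s * G s| ≤ B := by
    intro t ht
    have habs : |∫ s in x₀..t, awt a lam mu s * G s|
        ≤ ∫ s in x₀..t, |awt a lam mu s * G s| :=
      intervalIntegral.abs_integral_le_integral_abs ht.1
    have hmono : ∫ s in x₀..t, |awt a lam mu s * G s| ≤ ∫ s in x₀..t, w s * G s := by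
      apply intervalIntegral.integral_mono_on ht.1 (hawtgInt x₀ t).abs (hwgInt x₀ t)
      intro s _
      rw [abs_mul, abs_of_nonneg (hGnn s)]
      apply mul_le_mul_of_nonneg_right _ (hGnn s)
      have hp : 0 ≤ lam * pospart a s := mul_nonneg hlam.le (le_max_right _ _)
      have hn : 0 ≤ mu * negpart a s := mul_nonneg hmupos.le (le_max_right _ _)
      rw [abs_le]
      constructor
      · show -(lam * pospart a s + mu * negpart a s) ≤ lam * pospart a s - mu * negpart a s
        linarith
      · show lam * pospart a s - mu * negpart a s ≤ lam * pospart a s + mu * negpart a s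
        linarith
    have hrest : ∫ s in x₀..t, w s * G s ≤ B := by
      have hadj : (∫ s in x₀..t, w s * G s) + ∫ s in t..(x₀+P), w s * G s = B :=
        intervalIntegral.integral_add_adjacent_intervals (hwgInt x₀ t) (hwgInt t (x₀+P))
      have h2 : 0 ≤ ∫ s in t..(x₀+P), w s * G s :=
        intervalIntegral.integral_nonneg ht.2 (fun s _ => mul_nonneg (hwnn s) (hGnn s))
      linarith
    linarith
  have hgron : ∀ y ∈ Icc x₀ (x₀ + P), ‖u y - M‖ ≤ gronwallBound 0 K B (y - x₀) := by
    apply norm_le_gronwallBound_of_norm_deriv_right_le (f' := u')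
    · exact (hucont.sub continuous_const).continuousOn
    · intro t _; exact ((huderiv t).sub_const M).hasDerivWithinAt
    · simp [hMdef]
    · intro t ht
      have hid := hkey x₀ t
      rw [hu'x₀, sub_zero] at hid
      have h2 : |∫ s in x₀..t, awt a lam mu s * G s| ≤ B :=
        hJB t ⟨ht.1, ht.2.le⟩
      rw [Real.norm_eq_abs, Real.norm_eq_abs, hid]
      have h3 : |(-(c * (u t - M)) - θ * ∫ s in x₀..t, awt a lam mu s * G s)|
          ≤ |c * (u t - M)| + |θ * ∫ s in x₀..t, awt a lam mu s * G s| := by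
        rw [sub_eq_add_neg]
        refine (abs_add_le _ _).trans ?_
        rw [abs_neg, abs_neg]
      have h4 : |c * (u t - M)| ≤ K * |u t - M| := by
        rw [abs_mul]
        apply mul_le_mul_of_nonneg_right _ (abs_nonneg _)
        simp [hKdef]
      have h5 : |θ * ∫ s in x₀..t, awt a lam mu s * G s| ≤ B := by
        rw [abs_mul, abs_of_pos hθ0]
        calc θ * |∫ s in x₀..t, awt a lam mu s * G s| ≤ 1 * B := by
              apply mul_le_mul hθ1 h2 (abs_nonneg _) zero_le_one
          _ = B := one_mul B
      linarith
  set D := B * Real.exp (K * P) with hDdef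
  have hD0 : 0 ≤ D := mul_nonneg hB0 (Real.exp_pos _).le
  have hosc' : ∀ y ∈ Icc x₀ (x₀ + P), |u y - M| ≤ D := by
    intro y hy
    have h1 := hgron y hy
    rw [Real.norm_eq_abs] at h1
    refine h1.trans ?_
    rw [gronwallBound_of_K_ne_0 (ne_of_gt hK0)]
    have he1 : Real.exp (K * (y - x₀)) ≤ Real.exp (K * P) := by
      apply Real.exp_le_exp.mpr
      apply mul_le_mul_of_nonneg_left _ hK0.le
      have := hy.2; linarith
    have he0 : (0:ℝ) < Real.exp (K * (y - x₀)) := Real.exp_pos _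
    have hBK : 0 ≤ B / K := div_nonneg hB0 hK0.le
    have hBKB : B / K ≤ B := div_le_self hB0 hK1
    calc (0:ℝ) * Real.exp (K * (y - x₀)) + B / K * (Real.exp (K * (y - x₀)) - 1)
        = B / K * (Real.exp (K * (y - x₀)) - 1) := by ring
      _ ≤ B / K * Real.exp (K * P) := by
            apply mul_le_mul_of_nonneg_left _ hBK
            linarith
      _ ≤ B * Real.exp (K * P) :=
            mul_le_mul_of_nonneg_right hBKB (Real.exp_pos (K * P)).le
  have hosc : ∀ t ∈ Icc (0:ℝ) P, |u t - M| ≤ D := by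
    intro t ht
    rcases le_or_gt x₀ t with h | h
    · exact hosc' t ⟨h, by have := ht.2; linarith⟩
    · have h1 := hosc' (t + P) ⟨by have := ht.1; linarith, by linarith⟩
      rwa [hper t] at h1
  -- the max of g ∘ u
  obtain ⟨t₁, ht₁mem, ht₁max⟩ := isCompact_Icc.exists_isMaxOn hIccne hGcont.continuousOn
  set T := G t₁ with hTdef
  have hTub : ∀ t, G t ≤ T := by
    intro t
    obtain ⟨s, hs, hus⟩ := hred t
    have : G t = G s := by simp only [hGdef, hus]
    rw [this]; exact ht₁max hs
  have hT0 : 0 ≤ T := hGnn t₁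
  -- B ≤ Q * T
  have hQint : ∫ t in (0:ℝ)..P, w t = Q := by
    show ∫ t in (0:ℝ)..P, (lam * pospart a t + mu * negpart a t) = Q
    rw [intervalIntegral.integral_add ((hposInt 0 P).const_mul lam)
      ((hnegInt 0 P).const_mul mu), intervalIntegral.integral_const_mul,
      intervalIntegral.integral_const_mul]
  have hwper : Function.Periodic w P := by
    intro x
    simp only [hwdef, pospart, negpart, ha.periodic x]
  have hshift : ∫ t in x₀..(x₀ + P), w t = Q := by
    have h1 := hwper.intervalIntegral_add_eq x₀ 0
    rw [zero_add] at h1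
    rw [h1, hQint]
  have hBQT : B ≤ Q * T := by
    have h1 : B ≤ ∫ t in x₀..(x₀ + P), w t * T := by
      apply intervalIntegral.integral_mono_on (by linarith) (hwgInt x₀ (x₀+P))
        ((hwInt x₀ (x₀+P)).mul_const T)
      intro t _
      exact mul_le_mul_of_nonneg_left (hTub t) (hwnn t)
    rw [intervalIntegral.integral_mul_const, hshift] at h1
    exact h1
  have hDC4T : D ≤ C4 * T := by
    have h1 : B * Real.exp (K * P) ≤ (Q * T) * Real.exp (K * P) :=
      mul_le_mul_of_nonneg_right hBQT (Real.exp_pos _).le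
    calc D = B * Real.exp (K * P) := rfl
      _ ≤ (Q * T) * Real.exp (K * P) := h1
      _ = C4 * T := by rw [hC4def]; ring
  -- T ≤ 2 g(M)
  have hLipM : ∀ t ∈ Icc (0:ℝ) P, |G t - g M| ≤ ε * D := by
    intro t ht
    have h1 : |g (u t) - g M| ≤ ε * |u t - M| := hδLip (u t) (hrange t) M hMmem
    have h2 : |u t - M| ≤ D := hosc t ht
    calc |G t - g M| ≤ ε * |u t - M| := h1
      _ ≤ ε * D := mul_le_mul_of_nonneg_left h2 hε.le
  have hTgM : T ≤ g M + ε * D := by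
    have h1 := hLipM t₁ ht₁mem
    have h2 : T - g M ≤ |G t₁ - g M| := by
      rw [hTdef]; exact le_abs_self _
    linarith
  have hεC4 : ε * C4 ≤ 1/2 := by
    have h1 : ε ≤ 1/(2*C4) := min_le_left _ _
    calc ε * C4 ≤ (1/(2*C4)) * C4 := mul_le_mul_of_nonneg_right h1 hC4.le
      _ = 1/2 := by field_simp
  have hT2 : T ≤ 2 * g M := by
    have h1 : ε * D ≤ ε * (C4 * T) := mul_le_mul_of_nonneg_left hDC4T hε.le
    have h2 : ε * (C4 * T) = (ε * C4) * T := by ring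
    have h3 : (ε * C4) * T ≤ (1/2) * T := mul_le_mul_of_nonneg_right hεC4 hT0
    linarith
  have hεD : ε * D ≤ 2 * ε * C4 * g M := by
    have h1 : ε * D ≤ ε * (C4 * T) := mul_le_mul_of_nonneg_left hDC4T hε.le
    have h2 : C4 * T ≤ C4 * (2 * g M) := mul_le_mul_of_nonneg_left hT2 hC4.le
    have h3 : ε * (C4 * T) ≤ ε * (C4 * (2 * g M)) := mul_le_mul_of_nonneg_left h2 hε.le
    calc ε * D ≤ ε * (C4 * (2 * g M)) := h1.trans h3
      _ = 2 * ε * C4 * g M := by ring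
  -- the two integral estimates
  have hIpUB : Ip ≤ Ap * (g M + ε * D) := by
    have h1 : Ip ≤ ∫ t in (0:ℝ)..P, pospart a t * (g M + ε * D) := by
      apply intervalIntegral.integral_mono_on hP.le (hposgInt 0 P)
        ((hposInt 0 P).mul_const _)
      intro t ht
      apply mul_le_mul_of_nonneg_left _ (le_max_right _ _)
      have h2 := hLipM t ht
      have h3 : G t - g M ≤ |G t - g M| := le_abs_self _
      linarith
    rwa [intervalIntegral.integral_mul_const] at h1
  have hInLB : An * (g M - ε * D) ≤ In := by
    have h1 : ∫ t in (0:ℝ)..P, negpart a t * (g M - ε * D) ≤ In := by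
      apply intervalIntegral.integral_mono_on hP.le ((hnegInt 0 P).mul_const _)
        (hneggInt 0 P)
      intro t ht
      apply mul_le_mul_of_nonneg_left _ (le_max_right _ _)
      have h2 := hLipM t ht
      have h3 : -(G t - g M) ≤ |G t - g M| := neg_le_abs _
      linarith
    rwa [intervalIntegral.integral_mul_const] at h1
  -- conclusion
  have hεQ : ε * (4 * C4 * Q) ≤ mu * An - lam * Ap := by
    have h1 : ε ≤ (mu * An - lam * Ap) / (4 * C4 * Q) := min_le_right _ _
    exact (le_div_iff₀ (by positivity)).mp h1
  have hfinal1 : mu * (An * (g M - ε * D)) ≤ lam * (Ap * (g M + ε * D)) := by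
    calc mu * (An * (g M - ε * D)) ≤ mu * In := mul_le_mul_of_nonneg_left hInLB hmupos.le
      _ = lam * Ip := heqPM.symm
      _ ≤ lam * (Ap * (g M + ε * D)) := mul_le_mul_of_nonneg_left hIpUB hlam.le
  have hfinal2 : (mu * An - lam * Ap) * g M ≤ ε * D * Q := by
    rw [hQdef]
    ring_nf at hfinal1 ⊢
    linarith
  have hfinal3 : ε * D * Q ≤ 2 * ε * C4 * g M * Q :=
    mul_le_mul_of_nonneg_right hεD hQ.le
  have hfinal4 : 2 * ε * C4 * Q * g M ≤ ((mu * An - lam * Ap) / 2) * g M := by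
    apply mul_le_mul_of_nonneg_right _ hgM.le
    ring_nf at hεQ ⊢
    linarith
  have hXg : 0 < (mu * An - lam * Ap) * g M := mul_pos (by linarith) hgM
  rw [hQdef] at hfinal3 hfinal4
  ring_nf at hfinal2 hfinal3 hfinal4 hXg
  linarith
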